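/- Corollary: Let A be an n-by-n real matrix that is TP_k for some 1 ≤ k ≤ n-2. If the (k+1)st compound C_{k+1}(A) is TP_2, then A is TP_{k+2}. -/

import Mathlib

open Matrix

open Matrix

/-- `A` is totally positive: every minor (with strictly increasing row and
column index selections) is positive. -/
def IsTP {α β : Type} [LinearOrder α] [LinearOrder β] (A : Matrix α β ℝ) : Prop :=
  ∀ (l : ℕ) (r : Fin l → α) (c : Fin l → β), StrictMono r → StrictMono c →
    0 < (A.submatrix r c).det

/-- `A` is `TP_k`: every minor of order at most `k` is positive. -/
def IsTPk {α β : Type} [LinearOrder α] [LinearOrder β] (A : Matrix α β ℝ) (k : ℕ) : Prop :=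
  ∀ (l : ℕ), l ≤ k → ∀ (r : Fin l → α) (c : Fin l → β), StrictMono r → StrictMono c →
    0 < (A.submatrix r c).det

/-- `k`-subsets of `{1,…,n}`, encoded as strictly increasing tuples. -/
abbrev STuple (n k : ℕ) : Type := {f : Fin k → Fin n // StrictMono f}

noncomputable instance lexPi {n k : ℕ} : LinearOrder (Lex (Fin k → Fin n)) :=
  @Pi.Lex.linearOrder (Fin k) (fun _ => Fin n) _
    Finite.to_wellFoundedLT _

/-- The lexicographic linear order on `k`-subsets. -/
noncomputable instance {n k : ℕ} : LinearOrder (STuple n k) :=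
  LinearOrder.lift' (fun s => toLex s.1) (fun _ _ h => Subtype.ext (congrArg ofLex h))

/-- The `k`-th compound matrix of `A`: the matrix of all `k×k` minors of `A`,
rows and columns indexed by `k`-subsets ordered lexicographically. -/
noncomputable def compound {n : ℕ} (A : Matrix (Fin n) (Fin n) ℝ) (k : ℕ) :
    Matrix (STuple n k) (STuple n k) ℝ :=
  fun s t => (A.submatrix s.1 t.1).det

/-- The `k`-th Dodgson condensation matrix of `A`: the `(n-k) × (n-k)` matrix of
contiguous minors of order `k+1` (0-indexed positions). -/
noncomputable def Dmat {n : ℕ} (A : Matrix (Fin n) (Fin n) ℝ) (k : ℕ) :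
    Matrix (Fin (n - k)) (Fin (n - k)) ℝ :=
  fun i j =>
    (A.submatrix
      (fun p : Fin (k + 1) => (⟨i.1 + p.1, by have := i.2; have := p.2; omega⟩ : Fin n))
      (fun p : Fin (k + 1) => (⟨j.1 + p.1, by have := j.2; have := p.2; omega⟩ : Fin n))).det

/-- The contiguous minor of `A` of order `sz` with top-left position `(i, j)`
(0-indexed): `det A[{i,…,i+sz-1},{j,…,j+sz-1}]`. -/
noncomputable def cminor {n : ℕ} (A : Matrix (Fin n) (Fin n) ℝ) (sz i j : ℕ)
    (hi : i + sz ≤ n) (hj : j + sz ≤ n) : ℝ :=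
  (A.submatrix (fun p : Fin sz => (⟨i + p.1, by have := p.2; omega⟩ : Fin n))
               (fun p : Fin sz => (⟨j + p.1, by have := p.2; omega⟩ : Fin n))).det


open Equiv Polynomial

lemma fix_middle {m : ℕ} (σ : Equiv.Perm (Fin (m+2)))
    (h : ∀ j, j ≠ 0 → j ≠ Fin.last (m+1) → σ j = j) :
    σ = 1 ∨ σ = Equiv.swap 0 (Fin.last (m+1)) := by
  set L := Fin.last (m+1) with hL
  have h0L : (0 : Fin (m+2)) ≠ L := by simp [hL, Fin.ext_iff]
  have key : ∀ a : Fin (m+2), σ a = 0 ∨ σ a = L ∨ σ a = a := by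
    intro a
    by_contra hc
    push_neg at hc
    have := h (σ a) hc.1 hc.2.1
    exact hc.2.2 (σ.injective this)
  have h0 : σ 0 = 0 ∨ σ 0 = L := by rcases key 0 with h1 | h1 | h1 <;> tauto
  rcases h0 with h1 | h1
  · left
    ext j
    by_cases hj0 : j = 0
    · simp [hj0, h1]
    by_cases hjL : j = L
    · rcases key L with h2 | h2 | h2
      · exact absurd (σ.injective (h1.trans h2.symm)) h0L
      · simp [hjL, h2]
      · simp [hjL, h2]
    · simp [h j hj0 hjL]
  · right
    have h2 : σ L = 0 := by
      rcases key L with h2 | h2 | h2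
      · exact h2
      · exact absurd (σ.injective (h1.trans h2.symm)) h0L
      · exact absurd (σ.injective (h1.trans h2.symm)) h0L
    ext j
    by_cases hj0 : j = 0
    · simp [hj0, h1, Equiv.swap_apply_left]
    by_cases hjL : j = L
    · simp [hjL, h2, Equiv.swap_apply_right]
    · simp [h j hj0 hjL, Equiv.swap_apply_of_ne_of_ne hj0 hjL]

lemma det_bordered {m : ℕ} (u v : Fin (m+2) → ℝ)
    (N : Matrix (Fin (m+2)) (Fin (m+2)) ℝ)
    (hN : ∀ i j, N i j = if j = 0 then u i else if j = Fin.last (m+1) then v i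
      else if i = j then 1 else 0) :
    N.det = u 0 * v (Fin.last (m+1)) - u (Fin.last (m+1)) * v 0 := by
  set L := Fin.last (m+1) with hL
  have h0L : (0 : Fin (m+2)) ≠ L := by simp [hL, Fin.ext_iff]
  have hswap : (1 : Perm (Fin (m+2))) ≠ Equiv.swap 0 L := by
    intro hc
    have : (0 : Fin (m+2)) = L := by
      have := congrArg (fun σ : Perm (Fin (m+2)) => σ 0) hc
      simpa [Equiv.swap_apply_left] using this
    exact h0L this
  rw [det_apply]
  rw [← Finset.sum_subset (Finset.subset_univ ({1, Equiv.swap 0 L} : Finset (Perm (Fin (m+2)))))]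
  · rw [Finset.sum_insert (by simp [hswap]), Finset.sum_singleton]
    have hp1 : ∏ i, N ((1 : Perm (Fin (m+2))) i) i = u 0 * v L := by
      rw [← Finset.prod_subset (Finset.subset_univ ({0, L} : Finset (Fin (m+2))))]
      · rw [Finset.prod_insert (by simp [h0L]), Finset.prod_singleton]
        simp [hN, h0L, h0L.symm]
      · intro i _ hi
        simp only [Finset.mem_insert, Finset.mem_singleton, not_or] at hi
        simp [hN, hi.1, hi.2]
    have hp2 : ∏ i, N (Equiv.swap 0 L i) i = u L * v 0 := by
      rw [← Finset.prod_subset (Finset.subset_univ ({0, L} : Finset (Fin (m+2))))]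
      · rw [Finset.prod_insert (by simp [h0L]), Finset.prod_singleton]
        simp [hN, h0L, h0L.symm, Equiv.swap_apply_left, Equiv.swap_apply_right]
      · intro i _ hi
        simp only [Finset.mem_insert, Finset.mem_singleton, not_or] at hi
        simp [hN, hi.1, hi.2, Equiv.swap_apply_of_ne_of_ne hi.1 hi.2]
    rw [hp1, hp2, Equiv.Perm.sign_one, Equiv.Perm.sign_swap h0L]
    simp [sub_eq_add_neg]
  · intro σ _ hσ
    simp only [Finset.mem_insert, Finset.mem_singleton, not_or] at hσ
    have : ∃ j, j ≠ 0 ∧ j ≠ L ∧ σ j ≠ j := by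
      by_contra hc
      push_neg at hc
      rcases fix_middle σ (fun j h1 h2 => hc j h1 h2) with h | h
      · exact hσ.1 h
      · exact hσ.2 h
    obtain ⟨j, hj0, hjL, hj⟩ := this
    have : N (σ j) j = 0 := by simp [hN, hj0, hjL, hj]
    rw [Finset.prod_eq_zero (f := fun i => N (σ i) i) (Finset.mem_univ j) this, smul_zero]


lemma det_updateColumn_single {m : ℕ} (M : Matrix (Fin (m+2)) (Fin (m+2)) ℝ)
    (i0 j0 : Fin (m+2)) :
    (M.updateCol j0 (Pi.single i0 1)).det =
      (-1)^((i0:ℕ)+(j0:ℕ)) * (M.submatrix i0.succAbove j0.succAbove).det := by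
  rw [det_succ_column _ j0, Finset.sum_eq_single i0]
  · have h1 : (M.updateCol j0 (Pi.single i0 1)) i0 j0 = 1 := by simp
    have h2 : (M.updateCol j0 (Pi.single i0 1)).submatrix i0.succAbove j0.succAbove
        = M.submatrix i0.succAbove j0.succAbove := by
      ext a b
      simp [updateCol_apply, Fin.succAbove_ne]
    rw [h1, h2, mul_one]
  · intro i _ hi
    have : (M.updateCol j0 (Pi.single i0 1)) i j0 = 0 := by
      simp [updateCol_apply, Pi.single_eq_of_ne hi]
    rw [this, mul_zero, zero_mul]
  · intro h
    exact absurd (Finset.mem_univ i0) h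

lemma DJ_of_det_ne_zero {m : ℕ} (M : Matrix (Fin (m+2)) (Fin (m+2)) ℝ) (h : M.det ≠ 0) :
    M.det * (M.submatrix (fun i : Fin m => i.castSucc.succ)
        (fun i : Fin m => i.castSucc.succ)).det =
      (M.submatrix Fin.succ Fin.succ).det * (M.submatrix Fin.castSucc Fin.castSucc).det -
      (M.submatrix Fin.succ Fin.castSucc).det * (M.submatrix Fin.castSucc Fin.succ).det := by
  set L := Fin.last (m+1) with hL
  set u := cramer M (Pi.single 0 1) with hu
  set v := cramer M (Pi.single L 1) with hv
  set N : Matrix (Fin (m+2)) (Fin (m+2)) ℝ :=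
    fun i j => if j = 0 then u i else if j = L then v i else if i = j then (1:ℝ) else 0 with hNdef
  set P : Matrix (Fin (m+2)) (Fin (m+2)) ℝ :=
    fun i j => if j = 0 then M.det * (Pi.single (0 : Fin (m+2)) (1:ℝ) : Fin (m+2) → ℝ) i
      else if j = L then M.det * (Pi.single L (1:ℝ) : Fin (m+2) → ℝ) i else M i j with hPdef
  have hMN : M * N = P := by
    ext i j
    rw [mul_apply]
    by_cases hj0 : j = 0
    · subst hj0
      have : ∑ k, M i k * u k = (M *ᵥ u) i := rfl
      simp only [hNdef, if_pos rfl]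
      rw [this, hu, mulVec_cramer]
      simp [hPdef, Pi.smul_apply, smul_eq_mul]
    · by_cases hjL : j = L
      · subst hjL
        have e1 : ∀ k, N k L = v k := by
          intro k
          show (if L = 0 then u k else if L = L then v k else if k = L then 1 else 0) = v k
          rw [if_neg hj0, if_pos rfl]
        simp_rw [e1]
        have e2 : ∑ k, M i k * v k = (M *ᵥ v) i := rfl
        rw [e2, hv, mulVec_cramer]
        show M.det • (Pi.single L (1:ℝ) : Fin (m+2) → ℝ) i = P i L
        have e3 : P i L = M.det * (Pi.single L (1:ℝ) : Fin (m+2) → ℝ) i := by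
          show (if L = 0 then _ else if L = L then M.det * (Pi.single L (1:ℝ) : Fin (m+2) → ℝ) i else M i L) = _
          rw [if_neg hj0, if_pos rfl]
        rw [e3, smul_eq_mul]
      · simp only [hNdef, hPdef, hj0, hjL, ite_false, mul_ite, mul_one, mul_zero]
        simp [hj0, hjL]
  have hdetP : P.det = M.det * (M.det *
      (M.submatrix (fun i : Fin m => i.castSucc.succ) (fun i : Fin m => i.castSucc.succ)).det) := by
    rw [det_succ_column_zero, Finset.sum_eq_single 0]
    · have h1 : P 0 0 = M.det := by simp [hPdef]
      rw [h1]
      simp only [Fin.val_zero, pow_zero, one_mul, Fin.succAbove_zero]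
      congr 1
      set Q := P.submatrix Fin.succ Fin.succ with hQ
      rw [det_succ_column Q (Fin.last m), Finset.sum_eq_single (Fin.last m)]
      · have h2 : Q (Fin.last m) (Fin.last m) = M.det := by
          simp only [hQ, Matrix.submatrix_apply]
          simp [hQ, hPdef, Fin.succ_last, Fin.succ_ne_zero, hL]
        rw [h2]
        have heven : (-1 : ℝ)^((Fin.last m : ℕ) + (Fin.last m : ℕ)) = 1 :=
          Even.neg_one_pow ⟨(Fin.last m : ℕ), rfl⟩
        rw [heven, one_mul, Fin.succAbove_last]
        congr 1
        congr 1
        ext a b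
        have hb0 : (b.castSucc).succ ≠ (0 : Fin (m+2)) := Fin.succ_ne_zero _
        have hbL : (b.castSucc).succ ≠ L := by
          simp only [hL, ← Fin.succ_last, Ne, Fin.succ_inj]
          exact Fin.ne_last_of_lt (Fin.castSucc_lt_last b)
        simp only [hQ, Matrix.submatrix_apply]
        simp [hQ, hPdef, hb0, hbL]
      · intro i _ hi
        have : Q i (Fin.last m) = 0 := by
          have : i.succ ≠ L := by
            simp only [hL, ← Fin.succ_last, Ne, Fin.succ_inj]; exact hi
          simp only [hQ, Matrix.submatrix_apply]
          simp [hQ, hPdef, Fin.succ_ne_zero, this, hL, Pi.single_eq_of_ne ‹i.succ ≠ L›]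
          right; rw [Pi.single_apply, if_neg (by rwa [hL] at this)]
        rw [this, mul_zero, zero_mul]
      · intro h; exact absurd (Finset.mem_univ _) h
    · intro i _ hi
      have : P i 0 = 0 := by simp [hPdef, Pi.single_eq_of_ne hi]
      rw [this, mul_zero, zero_mul]
    · intro h; exact absurd (Finset.mem_univ _) h
  have hdetN : N.det = u 0 * v L - u L * v 0 := det_bordered u v N (fun i j => rfl)
  have hmain : N.det = M.det *
      (M.submatrix (fun i : Fin m => i.castSucc.succ) (fun i : Fin m => i.castSucc.succ)).det := by
    have := congrArg Matrix.det hMN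
    rw [det_mul, hdetP] at this
    exact mul_left_cancel₀ h this
  have hu0 : u 0 = (M.submatrix Fin.succ Fin.succ).det := by
    rw [hu, cramer_apply, det_updateColumn_single]
    simp [Fin.succAbove_zero]
  have hvL : v L = (M.submatrix Fin.castSucc Fin.castSucc).det := by
    rw [hv, cramer_apply, det_updateColumn_single]
    have : (-1 : ℝ)^((L:ℕ) + (L:ℕ)) = 1 := Even.neg_one_pow ⟨(L:ℕ), rfl⟩
    rw [this, one_mul, hL, Fin.succAbove_last]
  have huL : u L = (-1:ℝ)^(m+1) * (M.submatrix Fin.succ Fin.castSucc).det := by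
    rw [hu, cramer_apply, det_updateColumn_single]
    simp [hL, Fin.succAbove_zero, Fin.succAbove_last]
  have hv0 : v 0 = (-1:ℝ)^(m+1) * (M.submatrix Fin.castSucc Fin.succ).det := by
    rw [hv, cramer_apply, det_updateColumn_single]
    simp [hL, Fin.succAbove_zero, Fin.succAbove_last]
  rw [← hmain, hdetN, hu0, hvL, huL, hv0]
  have hsq : ((-1:ℝ)^(m+1)) * ((-1:ℝ)^(m+1)) = 1 := by
    rw [← pow_add]; exact Even.neg_one_pow ⟨m+1, rfl⟩
  linear_combination (-((M.submatrix Fin.succ Fin.castSucc).det *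
    (M.submatrix Fin.castSucc Fin.succ).det)) * hsq

lemma desnanot_jacobi {m : ℕ} (M : Matrix (Fin (m+2)) (Fin (m+2)) ℝ) :
    M.det * (M.submatrix (fun i : Fin m => i.castSucc.succ)
        (fun i : Fin m => i.castSucc.succ)).det =
      (M.submatrix Fin.succ Fin.succ).det * (M.submatrix Fin.castSucc Fin.castSucc).det -
      (M.submatrix Fin.succ Fin.castSucc).det * (M.submatrix Fin.castSucc Fin.succ).det := by
  -- polynomial perturbation argument
  set MX : Matrix (Fin (m+2)) (Fin (m+2)) ℝ[X] :=
    M.map C + (X : ℝ[X]) • 1 with hMX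
  have hcharm : MX = charmatrix (-M) := by
    ext i j
    simp [hMX, charmatrix_apply, Matrix.one_apply, Pi.single_apply, diagonal_apply,
      Matrix.smul_apply, smul_eq_mul, mul_ite, mul_one, mul_zero]
    split <;> ring
  have heval : ∀ t : ℝ, MX.map (eval t) = M + t • 1 := by
    intro t
    ext i j
    simp [hMX, Matrix.one_apply, Matrix.smul_apply, smul_eq_mul, apply_ite (eval t)]
  set p : ℝ[X] :=
    MX.det * (MX.submatrix (fun i : Fin m => i.castSucc.succ)
        (fun i : Fin m => i.castSucc.succ)).det -
      ((MX.submatrix Fin.succ Fin.succ).det * (MX.submatrix Fin.castSucc Fin.castSucc).det -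
      (MX.submatrix Fin.succ Fin.castSucc).det * (MX.submatrix Fin.castSucc Fin.succ).det)
    with hp
  have hevalp : ∀ t : ℝ, eval t p =
      (M + t • 1).det * ((M + t • 1).submatrix (fun i : Fin m => i.castSucc.succ)
        (fun i : Fin m => i.castSucc.succ)).det -
      (((M + t • 1).submatrix Fin.succ Fin.succ).det *
        ((M + t • 1).submatrix Fin.castSucc Fin.castSucc).det -
      ((M + t • 1).submatrix Fin.succ Fin.castSucc).det *
        ((M + t • 1).submatrix Fin.castSucc Fin.succ).det) := by
    intro t
    have hdet : ∀ {k : ℕ} (B : Matrix (Fin k) (Fin k) ℝ[X]), eval t B.det = (B.map (eval t)).det :=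
      fun B => RingHom.map_det (evalRingHom t) B
    simp only [hp, eval_sub, eval_mul, hdet, ← Matrix.submatrix_map, heval]
  -- the set of bad t is finite
  have hq : {t : ℝ | (M + t • 1).det = 0}.Finite := by
    have hchar : ∀ t : ℝ, (M + t • 1).det = eval t (Matrix.charpoly (-M)) := by
      intro t
      calc (M + t • 1).det = (MX.map (eval t)).det := by rw [heval]
        _ = eval t MX.det := (RingHom.map_det (evalRingHom t) MX).symm
        _ = eval t (Matrix.charpoly (-M)) := by rw [Matrix.charpoly, ← hcharm]
    have : {t : ℝ | (M + t • 1).det = 0} ⊆ {t : ℝ | IsRoot (Matrix.charpoly (-M)) t} := by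
      intro t ht
      simp only [Set.mem_setOf_eq, IsRoot] at *
      rw [← hchar]; exact ht
    exact Set.Finite.subset (Polynomial.finite_setOf_isRoot
      ((Matrix.charpoly_monic (-M)).ne_zero)) this
  have hroots : {t : ℝ | IsRoot p t}.Infinite := by
    have hsub : {t : ℝ | (M + t • 1).det ≠ 0} ⊆ {t : ℝ | IsRoot p t} := by
      intro t ht
      simp only [Set.mem_setOf_eq, IsRoot] at *
      rw [hevalp t]
      rw [sub_eq_zero]
      exact DJ_of_det_ne_zero (M + t • 1) ht
    have : {t : ℝ | (M + t • 1).det ≠ 0}.Infinite := by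
      have := Set.infinite_univ (α := ℝ)
      have hunion : (Set.univ : Set ℝ) ⊆ {t | (M + t • 1).det = 0} ∪ {t | (M + t • 1).det ≠ 0} := by
        intro t _; by_cases h : (M + t • 1).det = 0 <;> simp [h]
      by_contra hfin
      rw [Set.not_infinite] at hfin
      exact this (Set.Finite.subset (hq.union hfin) hunion)
    exact this.mono hsub
  have hp0 : p = 0 := Polynomial.eq_zero_of_infinite_isRoot p hroots
  have := hevalp 0
  rw [hp0] at this
  simp only [eval_zero, zero_smul, add_zero] at this
  linarith [this]

/-- **Corollary.** Let `A` be `TP_k` for some `1 ≤ k ≤ n-2`. If `C_{k+1}(A)` is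
`TP₂`, then `A` is `TP_{k+2}`. -/
theorem TPkplus2_of_compound_TP2 {n k : ℕ} (hk1 : 1 ≤ k) (hk2 : k ≤ n - 2)
    (A : Matrix (Fin n) (Fin n) ℝ) (hA : IsTPk A k)
    (hC : IsTPk (compound A (k + 1)) 2) : IsTPk A (k + 2) := by
  intro l hl r c hr hc
  rcases Nat.lt_or_ge l (k+1) with h | h
  · exact hA l (by omega) r c hr hc
  have hmono1 : ∀ {γ : Type} {inst : Preorder γ} (f : Fin 1 → γ),
      @StrictMono (Fin 1) γ _ inst f := by
    intro γ inst f a b hab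
    exact absurd (Subsingleton.elim a b) hab.ne
  rcases Nat.eq_or_lt_of_le h with h1 | h1
  · -- order k+1 minors: entries of the compound matrix
    have h1' : l = k + 1 := h1.symm
    subst h1'
    have h2 := hC 1 (by omega) (fun _ => (⟨r, hr⟩ : STuple n (k+1)))
      (fun _ => (⟨c, hc⟩ : STuple n (k+1))) (hmono1 _) (hmono1 _)
    rw [det_fin_one] at h2
    simpa [compound, Matrix.submatrix_apply] using h2
  · -- order k+2 minors: Desnanot-Jacobi
    have h2 : l = k + 2 := by omega
    subst h2
    have hDJ := desnanot_jacobi (A.submatrix r c)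
    have hmid : StrictMono (fun i : Fin k => (i.castSucc.succ : Fin (k+2))) :=
      Fin.strictMono_succ.comp Fin.strictMono_castSucc
    have hinner : 0 < ((A.submatrix r c).submatrix
        (fun i : Fin k => i.castSucc.succ) (fun i : Fin k => i.castSucc.succ)).det := by
      rw [Matrix.submatrix_submatrix]
      exact hA k le_rfl _ _ (hr.comp hmid) (hc.comp hmid)
    set S1 : STuple n (k+1) := ⟨r ∘ Fin.castSucc, hr.comp Fin.strictMono_castSucc⟩ with hS1
    set S2 : STuple n (k+1) := ⟨r ∘ Fin.succ, hr.comp Fin.strictMono_succ⟩ with hS2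
    set T1 : STuple n (k+1) := ⟨c ∘ Fin.castSucc, hc.comp Fin.strictMono_castSucc⟩ with hT1
    set T2 : STuple n (k+1) := ⟨c ∘ Fin.succ, hc.comp Fin.strictMono_succ⟩ with hT2
    have key : ∀ (U1 U2 : STuple n (k+1)) (g : Fin (k+2) → Fin n), StrictMono g →
        U1.1 = g ∘ Fin.castSucc → U2.1 = g ∘ Fin.succ →
        @StrictMono (Fin 2) (STuple n (k+1)) _
          (@PartialOrder.toPreorder _ (@LinearOrder.toPartialOrder _ inferInstance))
          ![U1, U2] := by
      intro U1 U2 g hg hU1 hU2 a b hab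
      fin_cases a <;> fin_cases b
      · exact absurd hab (lt_irrefl _)
      · show toLex (![U1, U2] 0).1 < toLex (![U1, U2] 1).1
        refine ⟨0, fun j hj => absurd hj (by simp), ?_⟩
        show (![U1, U2] 0).1 0 < (![U1, U2] 1).1 0
        simp only [Matrix.cons_val_zero, Matrix.cons_val_one, Matrix.head_cons, hU1, hU2]
        exact hg (show Fin.castSucc 0 < Fin.succ 0 by simp [Fin.lt_def])
      · exact absurd hab (by decide)
      · exact absurd hab (lt_irrefl _)
    have h3 := hC 2 le_rfl ![S1, S2] ![T1, T2] (key S1 S2 r hr rfl rfl) (key T1 T2 c hc rfl rfl)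
    rw [det_fin_two] at h3
    simp only [Matrix.submatrix_apply, Matrix.cons_val_zero, Matrix.cons_val_one,
      Matrix.head_cons, compound, hS1, hS2, hT1, hT2] at h3
    simp only [Matrix.submatrix_submatrix] at hDJ hinner
    have hpos : 0 < (A.submatrix r c).det *
        (A.submatrix (r ∘ fun i : Fin k => i.castSucc.succ)
          (c ∘ fun i : Fin k => i.castSucc.succ)).det := by
      rw [hDJ]
      linarith [h3]
    nlinarith [hpos, hinner]
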